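/- For every real y > 0, Σ_{n=1}^∞ 1/(n² + y²) = -1/(2y²) + (π/(2y))·coth(πy). -/

import Mathlib

open Real Complex intervalIntegral

private lemma integral_cosh_exp (y : ℝ) (hy : 0 < y) (n : ℤ) :
    (∫ x : ℝ in (0:ℝ)..(2*π), Complex.exp (-(n:ℂ) * I * x) * Complex.cosh (y * (x - π)))
      = Complex.sinh (π * y) * (2 * y) / ((n:ℂ)^2 + (y:ℂ)^2) := by
  have h1 : ((y:ℂ) - n * I) ≠ 0 := by
    intro h; have := congrArg Complex.re h; simp at this; linarith
  have h2 : (-(y:ℂ) - n * I) ≠ 0 := by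
    intro h; have := congrArg Complex.re h; simp at this; linarith
  have h3 : ((y:ℂ) + n * I) ≠ 0 := by
    intro h; have := congrArg Complex.re h; simp at this; linarith
  have hne : ((n:ℂ)^2 + (y:ℂ)^2) ≠ 0 := by
    have h0 : ((n:ℝ)^2 + y^2 : ℝ) ≠ 0 := by positivity
    have := Complex.ofReal_ne_zero.mpr h0
    push_cast at this
    exact this
  have key : ∀ x : ℝ, Complex.exp (-(n:ℂ) * I * x) * Complex.cosh (y * (x - π))
      = (Complex.exp (-((π:ℂ)*y)) / 2) * Complex.exp (((y:ℂ) - n*I) * x)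
        + (Complex.exp ((π:ℂ)*y) / 2) * Complex.exp ((-(y:ℂ) - n*I) * x) := by
    intro x
    rw [show Complex.cosh ((y:ℂ) * ((x:ℂ) - (π:ℂ))) =
      (Complex.exp ((y:ℂ)*((x:ℂ)-(π:ℂ))) + Complex.exp (-((y:ℂ)*((x:ℂ)-(π:ℂ)))))/2 from rfl]
    rw [show (((y:ℂ) - n*I) * x) = (-(n:ℂ) * I * x) + ((y:ℂ)*((x:ℂ)-(π:ℂ))) + ((π:ℂ)*y) by ring,
      show ((-(y:ℂ) - n*I) * x) = (-(n:ℂ) * I * x) + (-((y:ℂ)*((x:ℂ)-(π:ℂ)))) + (-((π:ℂ)*y)) by ring,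
      Complex.exp_add, Complex.exp_add, Complex.exp_add, Complex.exp_add]
    have h0 : Complex.exp (-((π:ℂ)*y)) * Complex.exp ((π:ℂ)*y) = 1 := by
      rw [← Complex.exp_add]; simp
    linear_combination (-(Complex.exp (-(n:ℂ)*I*(x:ℂ)) * Complex.exp ((y:ℂ)*((x:ℂ)-(π:ℂ))) /2
      + Complex.exp (-(n:ℂ)*I*(x:ℂ)) * Complex.exp (-((y:ℂ)*((x:ℂ)-(π:ℂ))))/2)) * h0
  rw [intervalIntegral.integral_congr (fun x _ => key x)]
  rw [intervalIntegral.integral_add, intervalIntegral.integral_const_mul,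
    intervalIntegral.integral_const_mul, integral_exp_mul_complex h1,
    integral_exp_mul_complex h2]
  · set a := Complex.exp ((π:ℂ)*y) with ha
    set b := Complex.exp (-((π:ℂ)*y)) with hb
    have hab : a * b = 1 := by rw [ha, hb, ← Complex.exp_add]; simp
    have e1 : Complex.exp (((y:ℂ) - n*I) * (2*(π:ℂ))) = a * a := by
      rw [ha, ← Complex.exp_add,
        show (((y:ℂ) - n*I) * (2*(π:ℂ))) = ((π:ℂ)*y + (π:ℂ)*y) + (-n:ℤ) * (2*π*I) by push_cast; ring,
        Complex.exp_add, Complex.exp_int_mul_two_pi_mul_I, mul_one]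
    have e2 : Complex.exp ((-(y:ℂ) - n*I) * (2*(π:ℂ))) = b * b := by
      rw [hb, ← Complex.exp_add,
        show ((-(y:ℂ) - n*I) * (2*(π:ℂ))) = (-((π:ℂ)*y) + -((π:ℂ)*y)) + (-n:ℤ) * (2*π*I) by push_cast; ring,
        Complex.exp_add, Complex.exp_int_mul_two_pi_mul_I, mul_one]
    have hsinh : Complex.sinh ((π:ℂ)*(y:ℂ)) = (a - b)/2 := rfl
    have hpf : (1:ℂ)/((y:ℂ) - n*I) + 1/((y:ℂ) + n*I) = 2*(y:ℂ)/((n:ℂ)^2+(y:ℂ)^2) := by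
      rw [div_add_div _ _ h1 h3, div_eq_div_iff (mul_ne_zero h1 h3) hne]
      linear_combination (2*(y:ℂ)*(n:ℂ)^2) * Complex.I_sq
    have t1 : b * (a*a - 1) = a - b := by linear_combination a * hab
    have t2 : a * (b*b - 1) = b - a := by linear_combination b * hab
    push_cast
    rw [e1, e2]
    simp only [Complex.ofReal_zero, mul_zero, Complex.exp_zero, hsinh]
    calc b / 2 * ((a*a - 1)/((y:ℂ) - n*I)) + a / 2 * ((b*b - 1)/(-(y:ℂ) - n*I))
        = (b*(a*a-1)) / 2 / ((y:ℂ)-n*I) + (a*(b*b-1))/2/(-(y:ℂ)-n*I) := by ring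
      _ = (a-b)/2/((y:ℂ)-n*I) + (b-a)/2/(-(y:ℂ)-n*I) := by rw [t1, t2]
      _ = (a-b)/2 * (1/((y:ℂ)-n*I) + 1/((y:ℂ)+n*I)) := by
          rw [show (-(y:ℂ)-n*I) = -((y:ℂ)+n*I) by ring, div_neg]
          ring
      _ = (a-b)/2 * (2*(y:ℂ)/((n:ℂ)^2+(y:ℂ)^2)) := by rw [hpf]
      _ = (a-b)/2 * (2*(y:ℂ)) / ((n:ℂ)^2+(y:ℂ)^2) := by ring
  · exact (Continuous.intervalIntegrable (by fun_prop) _ _)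
  · exact (Continuous.intervalIntegrable (by fun_prop) _ _)

private lemma fourierCoeff_cosh (y : ℝ) (hy : 0 < y) (n : ℤ) :
    haveI : Fact (0 < 2*π) := ⟨by positivity⟩
    fourierCoeff (AddCircle.liftIco (2*π) 0 (fun x => Complex.cosh (y*(x-π)))) n
      = (((y * Real.sinh (π*y)) / (π * ((n:ℝ)^2 + y^2)) : ℝ) : ℂ) := by
  haveI : Fact (0 < 2*π) := ⟨by positivity⟩
  rw [fourierCoeff_liftIco_eq, fourierCoeffOn_eq_integral]
  simp only [zero_add, sub_zero, fourier_coe_apply, smul_eq_mul]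
  have hπ : (π:ℂ) ≠ 0 := Complex.ofReal_ne_zero.mpr Real.pi_ne_zero
  have hcong : Set.EqOn (fun x : ℝ => Complex.exp (2*π*I*(-n:ℤ)*x/((2*π:ℝ):ℂ)) * Complex.cosh (y*((x:ℂ)-π)))
      (fun x : ℝ => Complex.exp (-(n:ℂ) * I * x) * Complex.cosh (y * ((x:ℂ) - π)))
      (Set.uIcc (0:ℝ) (2*π)) := by
    intro x _
    simp only
    congr 2
    push_cast
    field_simp
  rw [intervalIntegral.integral_congr (μ := MeasureTheory.volume) hcong, integral_cosh_exp y hy n]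
  have hne : ((n:ℂ)^2 + (y:ℂ)^2) ≠ 0 := by
    have h0 : ((n:ℝ)^2 + y^2 : ℝ) ≠ 0 := by positivity
    have := Complex.ofReal_ne_zero.mpr h0
    push_cast at this
    exact this
  have hπ : (π:ℂ) ≠ 0 := Complex.ofReal_ne_zero.mpr Real.pi_ne_zero
  rw [Complex.real_smul]
  push_cast [Complex.ofReal_sinh]
  field_simp

theorem sum_inv_sq_add_sq (y : ℝ) (hy : 0 < y) :
    ∑' n : ℕ+, 1 / ((n : ℝ) ^ 2 + y ^ 2) =
      -1 / (2 * y ^ 2) + (π / (2 * y)) * (Real.cosh (π * y) / Real.sinh (π * y)) := by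
  haveI : Fact (0 < 2*π) := ⟨by positivity⟩
  have hsh : Real.sinh (π * y) ≠ 0 := by
    have : 0 < Real.sinh (π * y) := Real.sinh_pos_iff.mpr (by positivity)
    linarith
  -- Summability over ℕ (shifted) and ℤ
  have hpos : ∀ m : ℤ, (0:ℝ) < (m:ℝ)^2 + y^2 := fun m => by positivity
  have hshift : Summable (fun n : ℕ => 1/(((n:ℝ)+1)^2 + y^2)) := by
    have h1 : Summable (fun n : ℕ => 1/((n:ℝ)+1)^2) := by
      have h2 : Summable (fun n : ℕ => 1/(n:ℝ)^2) := summable_one_div_nat_pow.mpr one_lt_two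
      have := (summable_nat_add_iff 1).mpr h2
      refine this.congr fun n => by push_cast; ring
    refine Summable.of_nonneg_of_le (fun n => by positivity) (fun n => ?_) h1
    gcongr
    nlinarith [sq_nonneg y]
  obtain ⟨s, hs⟩ := hshift
  -- HasSum over ℤ from Fourier theory
  set g : ℝ → ℂ := fun x => Complex.cosh (y*(x-π)) with hg
  have hcont : Continuous (AddCircle.liftIco (2*π) 0 g) := by
    apply AddCircle.liftIco_zero_continuous
    · show Complex.cosh (y*((0:ℝ)-π)) = Complex.cosh (y*((2*π:ℝ)-π))
      push_cast
      rw [show (y:ℂ) * (0 - π) = -((y:ℂ)*(2*π - π)) by ring, Complex.cosh_neg]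
    · fun_prop
  set F : C(AddCircle (2*π), ℂ) := ⟨_, hcont⟩ with hF
  have hF' : ∀ n : ℤ, fourierCoeff (⇑F) n
      = (((y * Real.sinh (π*y)) / (π * ((n:ℝ)^2 + y^2)) : ℝ) : ℂ) := fun n =>
    fourierCoeff_cosh y hy n
  have hnat : HasSum (fun n : ℕ => 1/(((n:ℤ):ℝ)^2 + y^2)) (s + 1/y^2) := by
    have h1 : HasSum (fun n : ℕ => 1/(((n:ℕ):ℝ)^2 + y^2)) (s + 1/y^2) := by
      have h2 := (hasSum_nat_add_iff (f := fun n : ℕ => 1/(((n:ℕ):ℝ)^2 + y^2)) 1).mp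
        (hs.congr_fun fun n => by push_cast; ring)
      simpa using h2
    exact h1.congr_fun fun n => by push_cast; ring
  have hneg : HasSum (fun n : ℕ => 1/(((-(n+1) : ℤ):ℝ)^2 + y^2)) s :=
    hs.congr_fun fun n => by push_cast; ring
  have htot : HasSum (fun n : ℤ => 1/((n:ℝ)^2 + y^2)) ((s + 1/y^2) + s) :=
    HasSum.of_nat_of_neg_add_one hnat hneg
  have hcoef : Summable (fun n : ℤ => fourierCoeff (⇑F) n) := by
    simp only [hF']
    rw [summable_ofReal]
    exact (htot.summable.mul_left (y * Real.sinh (π*y) / π)).congr fun n => by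
      rw [div_mul_eq_mul_div, mul_one_div, div_div, mul_comm ((n:ℝ)^2+y^2) π]
  have hps := has_pointwise_sum_fourier_series_of_summable hcoef (0 : AddCircle (2*π))
  simp only [fourier_eval_zero, smul_eq_mul, mul_one] at hps
  have hF0 : F (0 : AddCircle (2*π)) = ((Real.cosh (π*y) : ℝ) : ℂ) := by
    show AddCircle.liftIco (2*π) 0 g ((0:ℝ) : AddCircle (2*π)) = _
    rw [AddCircle.liftIco_zero_coe_apply ⟨le_refl _, by positivity⟩]
    show Complex.cosh (y*((0:ℝ)-π)) = _
    push_cast [Complex.ofReal_cosh]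
    rw [show (y:ℂ) * (0 - π) = -((π:ℂ)*y) by ring, Complex.cosh_neg]
  rw [hF0] at hps
  simp only [hF'] at hps
  rw [hasSum_ofReal] at hps
  -- multiply by π/(y sinh)
  have hZsum : HasSum (fun n : ℤ => 1/((n:ℝ)^2 + y^2))
      (π/(y * Real.sinh (π*y)) * Real.cosh (π*y)) := by
    have := hps.mul_left (π/(y * Real.sinh (π*y)))
    refine this.congr_fun fun n => ?_
    have := (hpos n).ne'
    field_simp
  have hkey : (s + 1/y^2) + s = π/(y * Real.sinh (π*y)) * Real.cosh (π*y) :=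
    htot.unique hZsum
  -- finally the ℕ+ sum
  have hfin : HasSum (fun n : ℕ+ => 1 / ((n : ℝ) ^ 2 + y ^ 2)) s := by
    rw [← Equiv.hasSum_iff (Equiv.pnatEquivNat.symm)]
    refine hs.congr_fun fun n => ?_
    show (1:ℝ) / ((((Equiv.pnatEquivNat.symm n : ℕ+) : ℕ):ℝ)^2 + y^2) = _
    simp [Equiv.pnatEquivNat, Nat.succPNat]
  rw [hfin.tsum_eq]
  have hy' : y ≠ 0 := hy.ne'
  field_simp at hkey ⊢
  nlinarith [hkey, Real.sinh_pos_iff.mpr (show 0 < π*y by positivity)]
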